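/- Suppose κ < 0, m > 0, c ≠ 0, and r₊ > 0 satisfies c^2(12 − 9κ r₊^2)^{3/2} = 24 m r₊ (equivalently g(r₊) = 0). Then g'(r₊) = 0 if and only if r₊ = (−2/(3κ))^{1/2}, where g(r) = c^2/r − 24m/(12 − 9κr^2)^{3/2}. -/

import Mathlib

/-- If `κ < 0`, `m > 0`, `c ≠ 0`, and `r₊ > 0` satisfies
`c²(12 − 9κ r₊²)^{3/2} = 24 m r₊` (i.e. `g(r₊) = 0`), then `g'(r₊) = 0` iff
`r₊ = (−2/(3κ))^{1/2}`, where
`g'(r) = −c²/r² − 648 m κ r/(12 − 9κr²)^{5/2}`. -/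
theorem stmt_8 (κ m c rp : ℝ) (hκ : κ < 0) (hm : 0 < m) (hc : c ≠ 0)
    (hr : 0 < rp)
    (hzero : c ^ 2 * (12 - 9 * κ * rp ^ 2) ^ ((3 : ℝ) / 2) = 24 * m * rp) :
    (-(c ^ 2) / rp ^ 2
        - 648 * m * κ * rp / (12 - 9 * κ * rp ^ 2) ^ ((5 : ℝ) / 2) = 0)
      ↔ rp = Real.sqrt (-2 / (3 * κ)) := by
  have hrne : rp ≠ 0 := ne_of_gt hr
  have hA : (0:ℝ) < 12 - 9 * κ * rp ^ 2 := by nlinarith [sq_nonneg rp]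
  have h32 : (0:ℝ) < (12 - 9 * κ * rp ^ 2) ^ ((3:ℝ)/2) :=
    Real.rpow_pos_of_pos hA _
  have h52eq : (12 - 9 * κ * rp ^ 2) ^ ((5:ℝ)/2)
      = (12 - 9 * κ * rp ^ 2) * (12 - 9 * κ * rp ^ 2) ^ ((3:ℝ)/2) := by
    rw [show (5:ℝ)/2 = 1 + 3/2 by norm_num, Real.rpow_add hA, Real.rpow_one]
  have hm' : m = c ^ 2 * (12 - 9 * κ * rp ^ 2) ^ ((3:ℝ)/2) / (24 * rp) := by
    field_simp
    linarith [hzero]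
  have hc2 : (c:ℝ) ^ 2 ≠ 0 := pow_ne_zero 2 hc
  have key : -(c ^ 2) / rp ^ 2
        - 648 * m * κ * rp / (12 - 9 * κ * rp ^ 2) ^ ((5 : ℝ) / 2)
      = -(c ^ 2) * (12 + 18 * κ * rp ^ 2) / (rp ^ 2 * (12 - 9 * κ * rp ^ 2)) := by
    rw [hm', h52eq]
    have h1 := hA.ne'
    have h2 := h32.ne'
    generalize (12 - 9 * κ * rp ^ 2) ^ ((3:ℝ)/2) = B at h2 ⊢
    field_simp
    have h3 : 12 - rp ^ 2 * κ * 9 ≠ 0 := by linarith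
    field_simp
    ring
  rw [key]
  have hden : rp ^ 2 * (12 - 9 * κ * rp ^ 2) ≠ 0 := by positivity
  constructor
  · intro h
    have hnum : 12 + 18 * κ * rp ^ 2 = 0 := by
      rcases div_eq_zero_iff.mp h with h' | h'
      · rcases mul_eq_zero.mp h' with h'' | h''
        · exact absurd h'' (by simpa using hc2)
        · exact h''
      · exact absurd h' hden
    have hsq : rp ^ 2 = -2 / (3 * κ) := by
      rw [eq_div_iff (by intro h0; nlinarith : (3 * κ) ≠ 0)]
      linear_combination hnum / 6
    rw [← hsq]
    exact (Real.sqrt_sq hr.le).symm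
  · intro h
    have hxnn : (0:ℝ) ≤ -2 / (3 * κ) :=
      le_of_lt (div_pos_of_neg_of_neg (by norm_num) (by linarith))
    have hsq : rp ^ 2 = -2 / (3 * κ) := by rw [h, Real.sq_sqrt hxnn]
    have hnum : 12 + 18 * κ * rp ^ 2 = 0 := by
      have hκ0 : κ ≠ 0 := ne_of_lt hκ
      rw [hsq]
      field_simp
      ring
    rw [hnum, mul_zero, zero_div]
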